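/- Let n ≥ 1 and let A = (a_{i,j}) be the n×n matrix over Z_{2n²+2} defined by a_{i,j} = (−1)^{i+j}·(j + (i−1)n). If n is odd, then for every j ∈ [1,n] the sum of the entries of column j equals (−1)^{j+1}·(j + n(n−1)/2) in Z_{2n²+2}, and for every i ∈ [1,n] the sum of the entries of row i equals (−1)^{i+1}·((i−1)n + (n+1)/2) in Z_{2n²+2}. If n is even, then for every j ∈ [1,n] the sum of column j equals (−1)^j·n²/2 and for every i ∈ [1,n] the sum of row i equals (−1)^i·n/2 in Z_{2n²+2}. -/
import Mathlib

lemma alt_sum (α β : ℤ) (n : ℕ) :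
    2 * ∑ t ∈ Finset.Icc 1 n, (-1:ℤ)^t * (α + β * t) =
      if Even n then β * n else -(2*α + β*(n+1)) := by
  induction n with
  | zero => simp
  | succ m ih =>
    rw [Finset.sum_Icc_succ_top (by omega : 1 ≤ m+1)]
    rcases Nat.even_or_odd m with h | h
    · rw [if_pos h] at ih
      rw [if_neg (by simp [Nat.even_add_one, h])]
      rw [(h.add_one).neg_one_pow]
      push_cast
      linarith
    · rw [if_neg (by simpa using h)] at ih
      rw [if_pos (by simpa [Nat.even_add_one] using h)]
      rw [(Odd.add_one h).neg_one_pow]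
      push_cast
      linarith

/-- Remark 3.3: total row and column sums of the matrix
a_{i,j} = (−1)^{i+j}·(j + (i−1)n) over Z_{2n²+2}. -/
theorem stmt9 (n : ℕ) (hn : 1 ≤ n) (A : ℕ → ℕ → ZMod (2 * n ^ 2 + 2))
    (hA : ∀ i ∈ Finset.Icc 1 n, ∀ j ∈ Finset.Icc 1 n,
      A i j = (((-1) ^ (i + j) * ((j : ℤ) + ((i : ℤ) - 1) * n) : ℤ) : ZMod (2 * n ^ 2 + 2))) :
    (Odd n →
      (∀ j ∈ Finset.Icc 1 n,
        (∑ i ∈ Finset.Icc 1 n, A i j) =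
          (((-1) ^ (j + 1) * ((j : ℤ) + (n : ℤ) * ((n : ℤ) - 1) / 2) : ℤ)
            : ZMod (2 * n ^ 2 + 2))) ∧
      (∀ i ∈ Finset.Icc 1 n,
        (∑ j ∈ Finset.Icc 1 n, A i j) =
          (((-1) ^ (i + 1) * (((i : ℤ) - 1) * n + ((n : ℤ) + 1) / 2) : ℤ)
            : ZMod (2 * n ^ 2 + 2)))) ∧
    (Even n →
      (∀ j ∈ Finset.Icc 1 n,
        (∑ i ∈ Finset.Icc 1 n, A i j) =
          (((-1) ^ j * ((n : ℤ) ^ 2 / 2) : ℤ) : ZMod (2 * n ^ 2 + 2))) ∧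
      (∀ i ∈ Finset.Icc 1 n,
        (∑ j ∈ Finset.Icc 1 n, A i j) =
          (((-1) ^ i * ((n : ℤ) / 2) : ℤ) : ZMod (2 * n ^ 2 + 2)))) := by
  -- column sums as integer sums
  have hcol : ∀ j ∈ Finset.Icc 1 n, ∑ i ∈ Finset.Icc 1 n, A i j =
      (((-1:ℤ)^j * ∑ i ∈ Finset.Icc 1 n, (-1:ℤ)^i * (((j:ℤ) - n) + (n:ℤ) * i) : ℤ)
        : ZMod (2 * n ^ 2 + 2)) := by
    intro j hj
    rw [Finset.mul_sum, Int.cast_sum]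
    refine Finset.sum_congr rfl fun i hi => ?_
    rw [hA i hi j hj]
    congr 1
    rw [pow_add]
    ring
  have hrow : ∀ i ∈ Finset.Icc 1 n, ∑ j ∈ Finset.Icc 1 n, A i j =
      (((-1:ℤ)^i * ∑ j ∈ Finset.Icc 1 n, (-1:ℤ)^j * ((((i:ℤ) - 1) * n) + 1 * j) : ℤ)
        : ZMod (2 * n ^ 2 + 2)) := by
    intro i hi
    rw [Finset.mul_sum, Int.cast_sum]
    refine Finset.sum_congr rfl fun j hj => ?_
    rw [hA i hi j hj]
    congr 1
    rw [pow_add]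
    ring
  constructor
  · rintro ⟨k, hk⟩
    have hkz : (n : ℤ) = 2 * k + 1 := by exact_mod_cast congrArg Nat.cast hk
    constructor
    · intro j hj
      rw [hcol j hj]
      congr 1
      have h := alt_sum ((j:ℤ) - n) (n:ℤ) n
      rw [if_neg (by simp [Nat.not_even_iff_odd.mpr ⟨k, hk⟩])] at h
      have hS : ∑ i ∈ Finset.Icc 1 n, (-1:ℤ)^i * (((j:ℤ) - n) + (n:ℤ) * i)
          = -((j:ℤ) + n * k) := by rw [hkz] at h ⊢; linarith
      rw [hS]
      have hd : (n:ℤ) * ((n:ℤ) - 1) / 2 = (n:ℤ) * k := by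
        rw [hkz, show (2*(k:ℤ)+1) * (2*k+1-1) = ((2*k+1)*k) * 2 by ring,
          Int.mul_ediv_cancel _ two_ne_zero]
      rw [hd, pow_succ]
      ring
    · intro i hi
      rw [hrow i hi]
      congr 1
      have h := alt_sum (((i:ℤ) - 1) * n) 1 n
      rw [if_neg (by simp [Nat.not_even_iff_odd.mpr ⟨k, hk⟩])] at h
      have hS : ∑ j ∈ Finset.Icc 1 n, (-1:ℤ)^j * ((((i:ℤ) - 1) * n) + 1 * j)
          = -(((i:ℤ) - 1) * n + (k + 1)) := by rw [hkz] at h ⊢; linarith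
      rw [hS]
      have hd : ((n:ℤ) + 1) / 2 = (k:ℤ) + 1 := by omega
      rw [hd, pow_succ]
      ring
  · rintro ⟨k, hk⟩
    have hkz : (n : ℤ) = 2 * k := by
      have : n = 2 * k := by omega
      exact_mod_cast congrArg Nat.cast this
    have hne : Even n := ⟨k, hk⟩
    constructor
    · intro j hj
      rw [hcol j hj]
      congr 1
      have h := alt_sum ((j:ℤ) - n) (n:ℤ) n
      rw [if_pos hne] at h
      have hS : ∑ i ∈ Finset.Icc 1 n, (-1:ℤ)^i * (((j:ℤ) - n) + (n:ℤ) * i)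
          = 2 * k * k := by rw [hkz] at h ⊢; linarith
      rw [hS]
      have hd : (n:ℤ)^2 / 2 = 2 * (k:ℤ) * k := by
        rw [hkz, show (2*(k:ℤ))^2 = (2*k*k) * 2 by ring, Int.mul_ediv_cancel _ two_ne_zero]
      rw [hd]
    · intro i hi
      rw [hrow i hi]
      congr 1
      have h := alt_sum (((i:ℤ) - 1) * n) 1 n
      rw [if_pos hne] at h
      have hS : ∑ j ∈ Finset.Icc 1 n, (-1:ℤ)^j * ((((i:ℤ) - 1) * n) + 1 * j)
          = k := by rw [hkz] at h ⊢; linarith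
      rw [hS]
      have hd : (n:ℤ) / 2 = (k:ℤ) := by omega
      rw [hd]
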